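/- For a colored permutation σ ∈ G_{r,n} = Z_r ≀ S_n, the excedance number with respect to the color order satisfies exc(σ) = r·exc_A(σ) + csum(σ), where exc_A(σ) = |{i ∈ [n-1] : σ(i) > i in the color order}| and csum(σ) = Σ_{i=1}^n c_i(σ) with c_i(σ) = z_i(σ^{-1}) the color assigned by σ to i (taken in {0,...,r-1}). -/

import Mathlib

open Finset Polynomial

/-- The group of colored permutations `G_{r,n} = Z_r ≀ S_n`, realized as bijections of the
colored alphabet `Σ = [n] × {0,…,r-1}` commuting with the color shift. -/
def ColoredPerm (r n : ℕ) [NeZero r] : Type :=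
  {π : Equiv.Perm (Fin n × Fin r) //
    ∀ x : Fin n × Fin r, π (x.1, x.2 + 1) = ((π x).1, (π x).2 + 1)}

/-- The color order on the colored alphabet:
`1^[r-1] < ⋯ < n^[r-1] < ⋯ < 1^[0] < ⋯ < n^[0]` (higher color is smaller). -/
def colorLt {r n : ℕ} (x y : Fin n × Fin r) : Prop :=
  y.2 < x.2 ∨ (x.2 = y.2 ∧ x.1 < y.1)

/-- The excedance number `exc` of a colored permutation. -/
noncomputable def cExc {r n : ℕ} [NeZero r] (π : ColoredPerm r n) : ℕ :=
  Nat.card {x : Fin n × Fin r // colorLt x (π.1 x)}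

/-- `exc_A(π) = |{i ∈ [n-1] : π(i) > i}|` (positions are the color-0 letters,
and `i ∈ [n-1]` corresponds to `i.val + 1 < n`). -/
noncomputable def cExcA {r n : ℕ} [NeZero r] (π : ColoredPerm r n) : ℕ :=
  Nat.card {i : Fin n // i.val + 1 < n ∧ colorLt (i, 0) (π.1 (i, 0))}

/-- `csum(π)`: the sum of the colors appearing in the window notation of `π`. -/
def csum {r n : ℕ} [NeZero r] (π : ColoredPerm r n) : ℕ :=
  ∑ i : Fin n, (π.1 (i, 0)).2.val

instance {r n : ℕ} (x y : Fin n × Fin r) : Decidable (colorLt x y) :=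
  inferInstanceAs (Decidable (_ ∨ _))

open Fin.NatCast in
lemma cp_shift {r n : ℕ} [NeZero r] (π : ColoredPerm r n) (x : Fin n × Fin r) (k : ℕ) :
    π.1 (x.1, x.2 + (k : Fin r)) = ((π.1 x).1, (π.1 x).2 + (k : Fin r)) := by
  induction k with
  | zero => simp
  | succ k ih =>
      have h := π.2 (x.1, x.2 + (k : Fin r))
      push_cast
      rw [← add_assoc, h, ih, add_assoc]

open Fin.NatCast in
lemma cp_apply {r n : ℕ} [NeZero r] (π : ColoredPerm r n) (i : Fin n) (α : Fin r) :
    π.1 (i, α) = ((π.1 (i, 0)).1, (π.1 (i, 0)).2 + α) := by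
  have h := cp_shift π (i, 0) α.val
  simpa [Fin.cast_val_eq_self] using h

lemma sum_range_ite (m c : ℕ) : (∑ k ∈ Finset.range m, if c ≤ k then 1 else 0) = m - c := by
  induction m with
  | zero => simp
  | succ m ih => rw [Finset.sum_range_succ, ih]; split_ifs <;> omega

lemma colorLt_imp {r n : ℕ} [NeZero r] {i : Fin n} {y : Fin n × Fin r}
    (h : colorLt (i, 0) y) : i.val + 1 < n := by
  rcases h with h | ⟨_, h⟩
  · simp [Fin.lt_def] at h
  · have h2 : (i : ℕ) < y.1.val := h
    have := y.1.isLt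
    omega

lemma row_count {r n : ℕ} [NeZero r] (π : ColoredPerm r n) (i : Fin n) :
    (∑ α : Fin r, if colorLt (i, α) (π.1 (i, α)) then 1 else 0)
      = r * (if colorLt (i, 0) (π.1 (i, 0)) then 1 else 0) + (π.1 (i, 0)).2.val := by
  set j := (π.1 (i, 0)).1 with hj
  set β := (π.1 (i, 0)).2 with hβ
  have happ : ∀ α : Fin r, π.1 (i, α) = (j, β + α) := fun α => cp_apply π i α
  by_cases h0 : β = 0
  · have : ∀ α : Fin r, colorLt (i, α) (π.1 (i, α)) ↔ i < j := by
      intro α; rw [happ α, h0, zero_add]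
      simp [colorLt]
    simp only [this]
    rw [h0]
    simp [Finset.sum_const, mul_comm]
  · have hβpos : 0 < β.val := by
      rcases Nat.eq_zero_or_pos β.val with h | h
      · exact absurd (Fin.ext h) h0
      · exact h
    have hcond : ∀ α : Fin r, colorLt (i, α) (π.1 (i, α)) ↔ r - β.val ≤ α.val := by
      intro α
      rw [happ α]
      unfold colorLt
      simp only
      constructor
      · rintro (h | ⟨h, _⟩)
        · rw [Fin.lt_def, Fin.add_def] at h
          simp only at h
          rcases Nat.lt_or_ge (β.val + α.val) r with hlt | hge
          · rw [Nat.mod_eq_of_lt hlt] at h; omega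
          · omega
        · exact absurd (right_eq_add.mp h) h0
      · intro h
        left
        rw [Fin.lt_def, Fin.add_def]
        simp only
        have hge : r ≤ β.val + α.val := by have := β.isLt; omega
        have : (β.val + α.val) % r = β.val + α.val - r := by
          rw [Nat.mod_eq_sub_mod hge, Nat.mod_eq_of_lt (by have := β.isLt; have := α.isLt; omega)]
        rw [this]
        have := α.isLt
        omega
    have hcond0 : ¬ colorLt (i, (0 : Fin r)) (π.1 (i, 0)) := by
      rw [show π.1 (i, 0) = (j, β) from rfl]
      unfold colorLt
      simp only
      rintro (h | ⟨h, _⟩)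
      · exact absurd (Fin.lt_def.mp h) (by simp)
      · exact h0 h.symm
    rw [if_neg hcond0, mul_zero, zero_add]
    simp only [hcond]
    rw [show (∑ α : Fin r, if r - β.val ≤ α.val then 1 else 0)
        = ∑ k ∈ Finset.range r, if r - β.val ≤ k then 1 else 0 from
      Fin.sum_univ_eq_sum_range (fun k => if r - β.val ≤ k then 1 else 0) r]
    rw [sum_range_ite]
    have := β.isLt
    omega

/-- For a colored permutation `σ ∈ G_{r,n}`, `exc(σ) = r·exc_A(σ) + csum(σ)`. -/
theorem exc_eq_r_excA_add_csum (r n : ℕ) [NeZero r] (π : ColoredPerm r n) :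
    cExc π = r * cExcA π + csum π := by
  classical
  have hExc : cExc π = ∑ i : Fin n, ∑ α : Fin r,
      if colorLt (i, α) (π.1 (i, α)) then 1 else 0 := by
    rw [cExc, Nat.card_eq_fintype_card, Fintype.card_subtype, Finset.card_filter,
      Fintype.sum_prod_type]
  have hExcA : cExcA π = ∑ i : Fin n,
      if colorLt (i, 0) (π.1 (i, 0)) then 1 else 0 := by
    rw [cExcA, Nat.card_eq_fintype_card, Fintype.card_subtype, Finset.card_filter]
    refine Finset.sum_congr rfl fun i _ => ?_
    exact if_congr (and_iff_right_of_imp colorLt_imp) rfl rfl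
  rw [hExc, hExcA, csum]
  rw [show r * ∑ i : Fin n, (if colorLt (i, 0) (π.1 (i, 0)) then 1 else 0)
      = ∑ i : Fin n, r * (if colorLt (i, 0) (π.1 (i, 0)) then 1 else 0) from
    Finset.mul_sum _ _ _, ← Finset.sum_add_distrib]
  exact Finset.sum_congr rfl fun i _ => row_count π i
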